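/- arXiv:1606.06809 — 5 statements merged into one kernel-verified Lean document; each statement's English description precedes it below -/
import Mathlib

section
/- Let A be an n × m matrix over ℤ/2ℤ such that the map r ↦ A·r is surjective, and suppose there exists a vector k in (ℤ/2ℤ)^m with A·k = 0 and with the sum of the entries of k equal to 1. Let J be the n × m all-ones matrix. Then the map r ↦ (A + J)·r is surjective. -/
theorem freeze_surjective (n m : ℕ) (A : Matrix (Fin n) (Fin m) (ZMod 2))
    (hA : Function.Surjective A.mulVec)
    (hk : ∃ k : Fin m → ZMod 2, A.mulVec k = 0 ∧ (∑ i, k i) = 1)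
    (J : Matrix (Fin n) (Fin m) (ZMod 2)) (hJ : ∀ i j, J i j = 1) :
    Function.Surjective (A + J).mulVec := by
  obtain ⟨k, hk0, hk1⟩ := hk
  intro y
  obtain ⟨r, hr⟩ := hA y
  have hJv : ∀ v : Fin m → ZMod 2, J.mulVec v = fun _ => ∑ j, v j := by
    intro v
    funext i
    simp [Matrix.mulVec, dotProduct, hJ]
  by_cases hs : (∑ j, r j) = 0
  · exact ⟨r, by
      funext i
      simp [Matrix.add_mulVec, hJv, hs, hr]⟩
  · have hs1 : (∑ j, r j) = 1 := by
      have h2 : ∀ x : ZMod 2, x = 0 ∨ x = 1 := by decide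
      rcases h2 (∑ j, r j) with h | h
      · exact absurd h hs
      · exact h
    refine ⟨r + k, ?_⟩
    have : (∑ j, (r + k) j) = 0 := by
      simp [Finset.sum_add_distrib, hs1, hk1]
      decide
    funext i
    simp [Matrix.add_mulVec, Matrix.mulVec_add, hJv, this, hk0, hr]
    rw [hs1, hk1, add_assoc]
    norm_num
    decide
end

section
/- Let A be an n × m matrix over ℤ/2ℤ such that the map r ↦ A·r is surjective and such that every vector k with A·k = 0 has the sum of its entries equal to 0. Say that an index i in {0,…,n−1} satisfies (⋆) if there exists r in (ℤ/2ℤ)^m with A·r = e_i (the i-th standard basis vector) and the sum of the entries of r equal to 1. Then for any r in (ℤ/2ℤ)^m with A·r = 𝟙 (the all-ones vector of (ℤ/2ℤ)^n), the sum of the entries of r equals 0 if and only if the number of indices i satisfying (⋆) is even. -/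
theorem all_ones_parity (n m : ℕ) (A : Matrix (Fin n) (Fin m) (ZMod 2))
    (hA : Function.Surjective A.mulVec)
    (hker : ∀ k : Fin m → ZMod 2, A.mulVec k = 0 → (∑ j, k j) = 0)
    (r : Fin m → ZMod 2) (hr : A.mulVec r = fun _ => 1) :
    (∑ j, r j) = 0 ↔
      Even (Nat.card {i : Fin n //
        ∃ s : Fin m → ZMod 2, A.mulVec s = Pi.single i 1 ∧ (∑ j, s j) = 1}) := by
  classical
  -- choose preimages of basis vectors
  choose s hs using fun i : Fin n => hA (Pi.single i 1)
  set σ : Fin n → ZMod 2 := fun i => ∑ j, s i j with hσ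
  -- any two preimages of the same vector have same entry sum
  have hsame : ∀ (v : Fin n → ZMod 2) (a b : Fin m → ZMod 2),
      A.mulVec a = v → A.mulVec b = v → (∑ j, a j) = (∑ j, b j) := by
    intro v a b ha hb
    have h0 : A.mulVec (a - b) = 0 := by
      rw [Matrix.mulVec_sub, ha, hb, sub_self]
    have := hker _ h0
    simp only [Pi.sub_apply, Finset.sum_sub_distrib, sub_eq_zero] at this
    exact this
  -- the star condition for i is exactly σ i = 1
  have hstar : ∀ i : Fin n,
      (∃ t : Fin m → ZMod 2, A.mulVec t = Pi.single i 1 ∧ (∑ j, t j) = 1) ↔ σ i = 1 := by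
    intro i
    constructor
    · rintro ⟨t, ht, ht1⟩
      show (∑ j, s i j) = 1
      rw [hsame _ (s i) t (hs i) ht]
      exact ht1
    · intro h
      exact ⟨s i, hs i, h⟩
  -- sum of r entries equals sum of σ
  have hAsum : A.mulVec (∑ i, s i) = fun _ => 1 := by
    have hm := map_sum A.mulVecLin s Finset.univ
    simp only [Matrix.mulVecLin_apply] at hm
    rw [hm]
    funext k
    simp [hs, Finset.sum_apply, Pi.single_apply]
  have hrs : (∑ j, r j) = ∑ i, σ i := by
    rw [hsame _ r (∑ i, s i) hr hAsum]
    show (∑ j, (∑ i, s i) j) = ∑ i, ∑ j, s i j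
    simp only [Finset.sum_apply]
    exact Finset.sum_comm
  -- card computation
  have hcard : Nat.card {i : Fin n //
      ∃ t : Fin m → ZMod 2, A.mulVec t = Pi.single i 1 ∧ (∑ j, t j) = 1}
      = (Finset.univ.filter fun i => σ i = 1).card := by
    rw [Nat.card_eq_fintype_card, Fintype.card_subtype]
    congr 1
    apply Finset.filter_congr
    intro i _
    simpa using hstar i
  have hsum : (∑ i, σ i) = ((Finset.univ.filter fun i => σ i = 1).card : ZMod 2) := by
    rw [(Finset.sum_filter_add_sum_filter_not Finset.univ (fun i => σ i = 1) σ).symm]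
    have h1 : ∑ i ∈ Finset.univ.filter fun i => σ i = 1, σ i
        = ((Finset.univ.filter fun i => σ i = 1).card : ZMod 2) := by
      rw [Finset.sum_congr rfl fun i hi => (Finset.mem_filter.mp hi).2]
      simp
    have h2 : ∑ i ∈ Finset.univ.filter fun i => ¬ σ i = 1, σ i = 0 := by
      apply Finset.sum_eq_zero
      intro i hi
      have h := (Finset.mem_filter.mp hi).2
      revert h
      generalize σ i = x
      revert x
      decide
    rw [h1, h2, add_zero]
  rw [hcard, hrs, hsum, ZMod.natCast_eq_zero_iff]
  exact even_iff_two_dvd.symm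
end

section
/- Let A be an n × m matrix over ℤ/2ℤ such that the map r ↦ A·r is surjective and such that every vector k with A·k = 0 has the sum of its entries equal to 0. Let J be the n × m all-ones matrix. Say that an index i in {0,…,n−1} satisfies (⋆) if there exists r in (ℤ/2ℤ)^m with A·r = e_i (the i-th standard basis vector) and the sum of the entries of r equal to 1. Then the following are equivalent: (1) for every index i there exists r in (ℤ/2ℤ)^m with (A + J)·r = e_i; (2) the number of indices i satisfying (⋆) is even. -/
theorem main2 (n m : ℕ) (A : Matrix (Fin n) (Fin m) (ZMod 2))
    (hA : Function.Surjective A.mulVec)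
    (hker : ∀ k : Fin m → ZMod 2, A.mulVec k = 0 → (∑ j, k j) = 0)
    (J : Matrix (Fin n) (Fin m) (ZMod 2)) (hJ : ∀ i j, J i j = 1) :
    (∀ i : Fin n, ∃ r : Fin m → ZMod 2, (A + J).mulVec r = Pi.single i 1) ↔
      Even (Nat.card {i : Fin n //
        ∃ r : Fin m → ZMod 2, A.mulVec r = Pi.single i 1 ∧ (∑ j, r j) = 1}) := by
  classical
  have h01 : ∀ a : ZMod 2, a = 0 ∨ a = 1 := by decide
  have hadd : ∀ r : Fin m → ZMod 2,
      (A + J).mulVec r = A.mulVec r + fun _ => ∑ j, r j := by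
    intro r
    funext i
    simp [Matrix.add_mulVec, Matrix.mulVec, dotProduct, hJ, add_mul,
      Finset.sum_add_distrib]
  have sumeq : ∀ (r r' : Fin m → ZMod 2), A.mulVec r = A.mulVec r' →
      ∑ j, r j = ∑ j, r' j := by
    intro r r' h
    have h0 : A.mulVec (r - r') = 0 := by
      rw [Matrix.mulVec_sub, h, sub_self]
    have h1 := hker _ h0
    have h2 : (∑ j, r j) - ∑ j, r' j = 0 := by
      rw [← Finset.sum_sub_distrib]; exact h1
    exact sub_eq_zero.mp h2
  set rr : Fin n → Fin m → ZMod 2 := fun i => (hA (Pi.single i 1)).choose with hrr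
  have hrA : ∀ i, A.mulVec (rr i) = Pi.single i 1 :=
    fun i => (hA (Pi.single i 1)).choose_spec
  set s : Fin n → ZMod 2 := fun i => ∑ j, rr i j with hs
  have hsdef : ∀ i, (∑ j, rr i j) = s i := fun i => rfl
  set R : Fin m → ZMod 2 := fun j => ∑ i, rr i j with hR
  have hRA : A.mulVec R = fun _ => 1 := by
    funext k
    have h : A.mulVec R k = ∑ i, A.mulVec (rr i) k := by
      simp only [Matrix.mulVec, dotProduct, hR, Finset.mul_sum]
      rw [Finset.sum_comm]
    rw [h]
    simp [hrA, Pi.single_apply]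
  have hRsum : ∑ j, R j = ∑ i, s i := by
    simp only [hR, hs]
    rw [Finset.sum_comm]
  -- characterize the star property
  have hstar : ∀ i : Fin n,
      (∃ r : Fin m → ZMod 2, A.mulVec r = Pi.single i 1 ∧ (∑ j, r j) = 1) ↔ s i = 1 := by
    intro i
    constructor
    · rintro ⟨r, h1, h2⟩
      have h3 := sumeq r (rr i) (h1.trans (hrA i).symm)
      rw [← hsdef i, ← h3, h2]
    · intro h
      exact ⟨rr i, hrA i, h⟩
  -- card computation
  set T : Finset (Fin n) := Finset.univ.filter (fun i => s i = 1) with hT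
  have hcard : Nat.card {i : Fin n //
      ∃ r : Fin m → ZMod 2, A.mulVec r = Pi.single i 1 ∧ (∑ j, r j) = 1} = T.card := by
    rw [Nat.card_congr (Equiv.subtypeEquivRight hstar)]
    rw [Nat.card_eq_fintype_card, Fintype.card_subtype, hT]
  have hsumcard : (∑ i, s i) = (T.card : ZMod 2) := by
    rw [hT, Finset.card_filter]
    push_cast
    apply Finset.sum_congr rfl
    intro x _
    rcases h01 (s x) with h | h <;> simp [h]
  have heven_iff : Even T.card ↔ (∑ i, s i) = 0 := by
    rw [hsumcard, Nat.even_iff, ← Nat.dvd_iff_mod_eq_zero]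
    exact (ZMod.natCast_eq_zero_iff T.card 2).symm
  rw [hcard, heven_iff]
  set c : ZMod 2 := ∑ i, s i with hc
  constructor
  · -- (1) → c = 0
    intro h
    by_contra hc1
    replace hc1 : c = 1 := (h01 c).resolve_left hc1
    obtain ⟨i, hi⟩ : ∃ i, s i = 1 := by
      by_contra hno
      push_neg at hno
      have h0 : ∀ i, s i = 0 := fun i => (h01 (s i)).resolve_right (hno i)
      have hcz : c = 0 := by rw [hc]; exact Finset.sum_eq_zero fun i _ => h0 i
      rw [hcz] at hc1; exact absurd hc1 (by decide)
    obtain ⟨r, hr⟩ := h i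
    rw [hadd] at hr
    rcases h01 (∑ j, r j) with ht | ht
    · have hAr : A.mulVec r = Pi.single i 1 := by
        funext k
        have hk := congrFun hr k
        simpa [ht] using hk
      have h3 := sumeq r (rr i) (hAr.trans (hrA i).symm)
      rw [ht, hsdef i] at h3
      rw [← h3] at hi
      exact absurd hi (by decide)
    · have hAr : A.mulVec r = (Pi.single i 1 : Fin n → ZMod 2) + fun _ => 1 := by
        funext k
        have hk := congrFun hr k
        simp only [Pi.add_apply, ht] at hk ⊢
        have h2 : (1 + 1 : ZMod 2) = 0 := by decide
        rw [← hk, add_assoc, h2, add_zero]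
      have hAr2 : A.mulVec (rr i + R) = (Pi.single i 1 : Fin n → ZMod 2) + fun _ => 1 := by
        rw [Matrix.mulVec_add, hrA, hRA]
      have h3 := sumeq r (rr i + R) (hAr.trans hAr2.symm)
      have hsum2 : ∑ j, (rr i + R) j = s i + c := by
        simp only [Pi.add_apply, Finset.sum_add_distrib, hsdef, hRsum, hc]
      rw [ht, hsum2, hi, hc1] at h3
      exact absurd h3 (by decide)
  · -- c = 0 → (1)
    intro hc0 i
    rcases h01 (s i) with hsi | hsi
    · refine ⟨rr i, ?_⟩
      rw [hadd, hrA]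
      funext k
      simp [hsdef, hsi]
    · refine ⟨rr i + R, ?_⟩
      rw [hadd, Matrix.mulVec_add, hrA, hRA]
      have hsum2 : ∑ j, (rr i + R) j = s i + c := by
        simp only [Pi.add_apply, Finset.sum_add_distrib, hsdef, hRsum, hc]
      rw [hsum2, hsi, hc0, add_zero]
      funext k
      simp only [Pi.add_apply]
      have h2 : (1 + 1 : ZMod 2) = 0 := by decide
      rw [add_assoc, h2, add_zero]
end

section
/- Let A be an n × m matrix over ℤ/2ℤ such that the map r ↦ A·r is surjective and such that every vector k with A·k = 0 has the sum of its entries equal to 0. Say that an index i satisfies (⋆) if there exists r in (ℤ/2ℤ)^m with A·r = e_i and the sum of the entries of r equal to 1. Suppose the number of indices satisfying (⋆) is even, and let i₀ be an index satisfying (⋆). Then there exists r in (ℤ/2ℤ)^m with the sum of its entries equal to 1 and A·r = 𝟙 + e_{i₀}, where 𝟙 is the all-ones vector of (ℤ/2ℤ)^n; consequently (A + J)·r = e_{i₀}, where J is the n × m all-ones matrix. -/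
theorem constructive_case (n m : ℕ) (A : Matrix (Fin n) (Fin m) (ZMod 2))
    (hA : Function.Surjective A.mulVec)
    (hker : ∀ k : Fin m → ZMod 2, A.mulVec k = 0 → (∑ j, k j) = 0)
    (J : Matrix (Fin n) (Fin m) (ZMod 2)) (hJ : ∀ i j, J i j = 1)
    (heven : Even (Nat.card {i : Fin n //
      ∃ r : Fin m → ZMod 2, A.mulVec r = Pi.single i 1 ∧ (∑ j, r j) = 1}))
    (i₀ : Fin n)
    (hi₀ : ∃ r : Fin m → ZMod 2, A.mulVec r = Pi.single i₀ 1 ∧ (∑ j, r j) = 1) :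
    ∃ r : Fin m → ZMod 2, (∑ j, r j) = 1 ∧
      A.mulVec r = (fun _ => 1) + Pi.single i₀ 1 ∧
      (A + J).mulVec r = Pi.single i₀ 1 := by
  classical
  have hch : ∀ i : Fin n, ∃ r : Fin m → ZMod 2, A.mulVec r = Pi.single i 1 :=
    fun i => hA (Pi.single i 1)
  choose r hr using hch
  set s : Fin n → ZMod 2 := fun i => ∑ j, r i j with hs
  obtain ⟨r₀, hr₀, hs₀⟩ := hi₀
  -- star i ↔ s i = 1
  have hstar : ∀ i : Fin n,
      (∃ r' : Fin m → ZMod 2, A.mulVec r' = Pi.single i 1 ∧ (∑ j, r' j) = 1) ↔ s i = 1 := by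
    intro i
    constructor
    · rintro ⟨r', hr', hsum⟩
      have hk : A.mulVec (r' + r i) = 0 := by
        rw [Matrix.mulVec_add, hr', hr i]
        ext k; simp [CharTwo.add_self_eq_zero]
      have h2 : (∑ j, r' j) + (∑ j, r i j) = 0 := by
        rw [← Finset.sum_add_distrib]; exact hker _ hk
      rw [hsum] at h2
      have key : ∀ x : ZMod 2, 1 + x = 0 → x = 1 := by decide
      exact key _ h2
    · intro h
      exact ⟨r i, hr i, h⟩
  -- sum of s equals cardinality of star set mod 2, which is 0
  have hzo : ∀ x : ZMod 2, x ≠ 1 → x = 0 := by decide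
  have hcard : Nat.card {i : Fin n //
      ∃ r : Fin m → ZMod 2, A.mulVec r = Pi.single i 1 ∧ (∑ j, r j) = 1}
      = (Finset.univ.filter fun i => s i = 1).card := by
    rw [Nat.card_congr (Equiv.subtypeEquivRight hstar), Nat.card_eq_fintype_card,
      Fintype.card_subtype]
  have hsumS : (∑ i, s i) = 0 := by
    have key : ∀ x : ZMod 2, x ≠ 0 → x = 1 := by decide
    have h1 : (∑ i, s i) = ∑ i ∈ Finset.univ.filter fun i => s i = 1, s i :=
      (Finset.sum_filter_of_ne fun i _ h => key _ h).symm
    have h2 : (∑ i ∈ Finset.univ.filter fun i => s i = 1, s i)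
        = ((Finset.univ.filter fun i => s i = 1).card : ZMod 2) := by
      rw [Finset.sum_congr rfl fun i hi => (Finset.mem_filter.mp hi).2]
      simp
    rw [h1, h2, ZMod.natCast_eq_zero_iff, ← hcard]
    exact heven.two_dvd
  -- the witness
  refine ⟨(∑ i, r i) + r₀, ?_, ?_, ?_⟩
  · have : (∑ j, ((∑ i, r i) + r₀) j) = (∑ i, s i) + ∑ j, r₀ j := by
      simp only [Pi.add_apply, Finset.sum_apply, Finset.sum_add_distrib, hs]
      rw [Finset.sum_comm]
    rw [this, hsumS, hs₀, zero_add]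
  · have hAsum : A.mulVec (∑ i, r i) = fun _ => 1 := by
      have : A.mulVec (∑ i, r i) = ∑ i, A.mulVec (r i) := by
        have h := map_sum A.mulVecLin r Finset.univ
        simp only [Matrix.mulVecLin_apply] at h
        exact h
      rw [this]
      ext k
      simp only [Finset.sum_apply, hr, Pi.single_apply]
      simp
    rw [Matrix.mulVec_add, hAsum, hr₀]
  · have hsum1 : (∑ j, ((∑ i, r i) + r₀) j) = 1 := by
      have : (∑ j, ((∑ i, r i) + r₀) j) = (∑ i, s i) + ∑ j, r₀ j := by
        simp only [Pi.add_apply, Finset.sum_apply, Finset.sum_add_distrib, hs]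
        rw [Finset.sum_comm]
      rw [this, hsumS, hs₀, zero_add]
    have hJv : J.mulVec ((∑ i, r i) + r₀) = fun _ => 1 := by
      ext k
      simp only [Matrix.mulVec, dotProduct, hJ, one_mul]
      exact hsum1
    have hAv : A.mulVec ((∑ i, r i) + r₀) = (fun _ => 1) + Pi.single i₀ 1 := by
      have hAsum : A.mulVec (∑ i, r i) = fun _ => 1 := by
        have : A.mulVec (∑ i, r i) = ∑ i, A.mulVec (r i) := by
          have h := map_sum A.mulVecLin r Finset.univ
          simp only [Matrix.mulVecLin_apply] at h
          exact h
        rw [this]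
        ext k
        simp only [Finset.sum_apply, hr, Pi.single_apply]
        simp
      rw [Matrix.mulVec_add, hAsum, hr₀]
    rw [Matrix.add_mulVec, hAv, hJv]
    ext k
    simp only [Pi.add_apply]
    ring_nf
    rw [show (2 : ZMod 2) = 0 by decide]
    ring
end

section
/- Let A be an n × m matrix over ℤ/2ℤ such that the map r ↦ A·r is surjective and such that every vector k with A·k = 0 has the sum of its entries equal to 0. Let J be the n × m all-ones matrix. Say that an index i satisfies (⋆) if there exists r in (ℤ/2ℤ)^m with A·r = e_i and the sum of the entries of r equal to 1. If the number of indices satisfying (⋆) is odd, then for every index i₀ satisfying (⋆) there is no r in (ℤ/2ℤ)^m with (A + J)·r = e_{i₀}. -/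
theorem obstruction (n m : ℕ) (A : Matrix (Fin n) (Fin m) (ZMod 2))
    (hA : Function.Surjective A.mulVec)
    (hker : ∀ k : Fin m → ZMod 2, A.mulVec k = 0 → (∑ j, k j) = 0)
    (J : Matrix (Fin n) (Fin m) (ZMod 2)) (hJ : ∀ i j, J i j = 1)
    (hodd : Odd (Nat.card {i : Fin n //
      ∃ r : Fin m → ZMod 2, A.mulVec r = Pi.single i 1 ∧ (∑ j, r j) = 1}))
    (i₀ : Fin n)
    (hi₀ : ∃ r : Fin m → ZMod 2, A.mulVec r = Pi.single i₀ 1 ∧ (∑ j, r j) = 1) :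
    ¬ ∃ r : Fin m → ZMod 2, (A + J).mulVec r = Pi.single i₀ 1 := by
  classical
  rintro ⟨r, hr⟩
  set P : Fin n → Prop := fun i =>
    ∃ r : Fin m → ZMod 2, A.mulVec r = Pi.single i 1 ∧ (∑ j, r j) = 1 with hP
  obtain ⟨g, hg⟩ : ∃ g : Fin n → Fin m → ZMod 2,
      ∀ i, A.mulVec (g i) = Pi.single i 1 := by
    choose g hg using fun i => hA (Pi.single i 1)
    exact ⟨g, hg⟩
  have h01 : ∀ a : ZMod 2, a = 0 ∨ a = 1 := by decide
  have hσ : ∀ i, (∑ j, g i j) = if P i then 1 else 0 := by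
    intro i
    by_cases h : P i
    · rw [if_pos h]
      obtain ⟨r', hr', hs'⟩ := h
      have hk : A.mulVec (g i + r') = 0 := by
        rw [Matrix.mulVec_add, hg, hr']
        funext x
        have : ∀ a : ZMod 2, a + a = 0 := by decide
        exact this _
      have hk2 := hker _ hk
      simp only [Pi.add_apply, Finset.sum_add_distrib, hs'] at hk2
      have : ∀ a : ZMod 2, a + 1 = 0 → a = 1 := by decide
      exact this _ hk2
    · simp only [h, if_false]
      rcases h01 (∑ j, g i j) with h0 | h1
      · exact h0
      · exact absurd ⟨g i, hg i, h1⟩ h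
  have hcard : (∑ i, ∑ j, g i j) = 1 := by
    have : (∑ i, ∑ j, g i j)
        = ((Finset.univ.filter P).card : ZMod 2) := by
      simp only [hσ]
      rw [Finset.sum_boole]
    rw [this]
    have hc : Nat.card {i : Fin n // P i} = (Finset.univ.filter P).card := by
      rw [Nat.card_eq_fintype_card, Fintype.card_subtype]
    obtain ⟨t, ht⟩ := hodd
    rw [hc] at ht
    rw [ht]
    push_cast
    have h2 : (2 : ZMod 2) = 0 := by decide
    rw [h2]
    ring
  have hσ₀ : (∑ j, g i₀ j) = 1 := by
    rw [hσ]
    simp only [hP]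
    rw [if_pos hi₀]
  rw [Matrix.add_mulVec] at hr
  have hJr : J.mulVec r = fun _ => (∑ j, r j) := by
    funext i
    simp [Matrix.mulVec, dotProduct, hJ]
  have hAr : A.mulVec r = Pi.single i₀ 1 - J.mulVec r := eq_sub_of_add_eq hr
  rcases h01 (∑ j, r j) with hs | hs
  · -- s = 0 : A r = e_{i₀}, so r + g i₀ is in the kernel, sum = 0 + 1 ≠ 0
    have hk : A.mulVec (r + g i₀) = 0 := by
      rw [Matrix.mulVec_add, hAr, hg, hJr]
      funext x
      simp only [Pi.sub_apply, Pi.add_apply, hs]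
      have : ∀ a : ZMod 2, a - 0 + a = 0 := by decide
      exact this _
    have hk2 := hker _ hk
    simp only [Pi.add_apply, Finset.sum_add_distrib, hs, hσ₀] at hk2
    exact absurd hk2 (by decide)
  · -- s = 1 : A r = e_{i₀} - 𝟙, use r + g i₀ + ∑ i, g i
    have hsum : A.mulVec (∑ i, g i) = ∑ i, Pi.single i (1 : ZMod 2) := by
      rw [← Matrix.mulVecLin_apply, map_sum]
      simp only [Matrix.mulVecLin_apply, hg]
    have hones : (∑ i, Pi.single i (1 : ZMod 2)) = fun (_ : Fin n) => (1 : ZMod 2) := by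
      exact Finset.univ_sum_single (fun _ => (1 : ZMod 2))
    have hk : A.mulVec (r + g i₀ + ∑ i, g i) = 0 := by
      rw [Matrix.mulVec_add, Matrix.mulVec_add, hAr, hg, hsum, hones, hJr]
      funext x
      simp only [Pi.sub_apply, Pi.add_apply, hs]
      have : ∀ a : ZMod 2, a - 1 + a + 1 = 0 := by decide
      exact this _
    have hk2 := hker _ hk
    simp only [Pi.add_apply, Finset.sum_add_distrib, hs, hσ₀, Finset.sum_apply] at hk2
    rw [Finset.sum_comm, hcard] at hk2
    exact absurd hk2 (by decide)
end
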